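/- Let 𝔅 be a Boolean subspace lattice in a complex Banach space X. If K is an atom of 𝔅 and N ∈ Lat(Alg(𝔅)), then either K ⊆ N or N ⊆ K'. -/

import Mathlib

open ContinuousLinearMap

/-- The closed linear span (join) of a family of subspaces. -/
noncomputable def cJoin {X : Type*} [NormedAddCommGroup X] [NormedSpace ℂ X]
    (S : Set (Submodule ℂ X)) : Submodule ℂ X :=
  (sSup S).topologicalClosure

/-- Join of two subspaces in the lattice of closed subspaces. -/
noncomputable def cJoin2 {X : Type*} [NormedAddCommGroup X] [NormedSpace ℂ X]
    (M N : Submodule ℂ X) : Submodule ℂ X :=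
  (M ⊔ N).topologicalClosure

/-- A subspace lattice: a complete lattice of closed subspaces containing the trivial ones. -/
def IsSubspaceLattice {X : Type*} [NormedAddCommGroup X] [NormedSpace ℂ X]
    (L : Set (Submodule ℂ X)) : Prop :=
  (∀ M ∈ L, IsClosed (M : Set X)) ∧ ⊥ ∈ L ∧ ⊤ ∈ L ∧
    ∀ S ⊆ L, cJoin S ∈ L ∧ sInf S ∈ L

/-- Alg(F): bounded operators leaving every member of F invariant. -/
def algOf {X : Type*} [NormedAddCommGroup X] [NormedSpace ℂ X]
    (L : Set (Submodule ℂ X)) : Set (X →L[ℂ] X) :=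
  {A | ∀ M ∈ L, ∀ x ∈ M, A x ∈ M}

/-- Lat(T): closed subspaces invariant under every operator in T. -/
def latOf {X : Type*} [NormedAddCommGroup X] [NormedSpace ℂ X]
    (T : Set (X →L[ℂ] X)) : Set (Submodule ℂ X) :=
  {M | IsClosed (M : Set X) ∧ ∀ A ∈ T, ∀ x ∈ M, A x ∈ M}

/-- The rank-one operator e ⊗ η : x ↦ η(x) • e. -/
noncomputable def rankOne {X : Type*} [NormedAddCommGroup X] [NormedSpace ℂ X]
    (e : X) (η : X →L[ℂ] ℂ) : X →L[ℂ] X :=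
  η.smulRight e

/-- The rank-one operators in a set of operators. -/
noncomputable def Rk1 {X : Type*} [NormedAddCommGroup X] [NormedSpace ℂ X]
    (T : Set (X →L[ℂ] X)) : Set (X →L[ℂ] X) :=
  {A ∈ T | ∃ (e : X) (η : X →L[ℂ] ℂ), e ≠ 0 ∧ η ≠ 0 ∧ A = rankOne e η}

/-- M₋ = ⋁{K ∈ L : M ⊄ K}. -/
noncomputable def mMinus {X : Type*} [NormedAddCommGroup X] [NormedSpace ℂ X]
    (L : Set (Submodule ℂ X)) (M : Submodule ℂ X) : Submodule ℂ X :=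
  cJoin {K | K ∈ L ∧ ¬ M ≤ K}

/-- M₊ = ⋀{K ∈ L : K ⊄ M}. -/
noncomputable def mPlus {X : Type*} [NormedAddCommGroup X] [NormedSpace ℂ X]
    (L : Set (Submodule ℂ X)) (M : Submodule ℂ X) : Submodule ℂ X :=
  sInf {K | K ∈ L ∧ ¬ K ≤ M}

/-- N_* = ⋀{M₋ : M ∈ L, M ⊄ N}. -/
noncomputable def nStar {X : Type*} [NormedAddCommGroup X] [NormedSpace ℂ X]
    (L : Set (Submodule ℂ X)) (N : Submodule ℂ X) : Submodule ℂ X :=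
  sInf {P | ∃ M, M ∈ L ∧ ¬ M ≤ N ∧ P = mMinus L M}

/-- The cyclic subspace [Alg(L)x]: closed linear span of the orbit of x under Alg(L). -/
noncomputable def cyclicSubspace {X : Type*} [NormedAddCommGroup X] [NormedSpace ℂ X]
    (L : Set (Submodule ℂ X)) (x : X) : Submodule ℂ X :=
  (Submodule.span ℂ ((fun A : X →L[ℂ] X => A x) '' algOf L)).topologicalClosure

/-- The pinch points of a family of subspaces. -/
def pinOf {X : Type*} [NormedAddCommGroup X] [NormedSpace ℂ X]
    (L : Set (Submodule ℂ X)) : Set (Submodule ℂ X) :=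
  {P | P ∈ L ∧ ∀ M ∈ L, M ≤ P ∨ P ≤ M}


/-- An atom of a subspace lattice: a nontrivial minimal element. -/
def IsLatAtom {X : Type*} [NormedAddCommGroup X] [NormedSpace ℂ X]
    (L : Set (Submodule ℂ X)) (K : Submodule ℂ X) : Prop :=
  K ∈ L ∧ K ≠ ⊥ ∧ K ≠ ⊤ ∧ ∀ B ∈ L, B ≤ K → B = ⊥ ∨ B = K

/-- A Boolean subspace lattice with complementation map `c`: distributive and
(uniquely) complemented. -/
def IsBooleanSubspaceLattice {X : Type*} [NormedAddCommGroup X] [NormedSpace ℂ X]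
    (L : Set (Submodule ℂ X)) (c : Submodule ℂ X → Submodule ℂ X) : Prop :=
  IsSubspaceLattice L ∧
  (∀ M ∈ L, ∀ N ∈ L, ∀ K ∈ L, M ⊓ cJoin2 N K = cJoin2 (M ⊓ N) (M ⊓ K)) ∧
  (∀ M ∈ L, ∀ N ∈ L, ∀ K ∈ L, cJoin2 M (N ⊓ K) = cJoin2 M N ⊓ cJoin2 M K) ∧
  (∀ M ∈ L, c M ∈ L ∧ M ⊓ c M = ⊥ ∧ cJoin2 M (c M) = ⊤) ∧
  (∀ M ∈ L, ∀ N ∈ L, M ⊓ N = ⊥ → cJoin2 M N = ⊤ → N = c M)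

/-- An atomic Boolean subspace lattice: every element is the join of the atoms below it. -/
def IsAtomicBooleanSubspaceLattice {X : Type*} [NormedAddCommGroup X] [NormedSpace ℂ X]
    (L : Set (Submodule ℂ X)) (c : Submodule ℂ X → Submodule ℂ X) : Prop :=
  IsBooleanSubspaceLattice L c ∧
  ∀ M ∈ L, M = cJoin {K | IsLatAtom L K ∧ K ≤ M}


/-- Hahn–Banach: a functional vanishing on a closed subspace with value 1 at a point outside. -/
lemma exists_functional_of_not_mem' {X : Type*} [NormedAddCommGroup X] [NormedSpace ℂ X]
    (M : Submodule ℂ X) (hMc : IsClosed (M : Set X)) {x : X} (hx : x ∉ M) :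
    ∃ η : X →L[ℂ] ℂ, η x = 1 ∧ ∀ y ∈ M, η y = 0 := by
  haveI : IsClosed (M : Set X) := hMc
  have hx0 : (Submodule.Quotient.mk x : X ⧸ M) ≠ 0 := by
    simpa [Submodule.Quotient.mk_eq_zero] using hx
  obtain ⟨g, hg⟩ := SeparatingDual.exists_eq_one (R := ℂ) hx0
  let q : X →L[ℂ] X ⧸ M := ⟨M.mkQ, M.isOpenQuotientMap_mkQ.continuous⟩
  refine ⟨g.comp q, hg, fun y hy => ?_⟩
  have : (Submodule.Quotient.mk y : X ⧸ M) = 0 := by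
    simpa [Submodule.Quotient.mk_eq_zero] using hy
  simp [q, ContinuousLinearMap.comp_apply, Submodule.mkQ_apply, this]

/-- If K is an atom and M ∈ L with ¬ K ≤ M, then M ≤ c K. -/
lemma le_complement_of_atom {X : Type*} [NormedAddCommGroup X] [NormedSpace ℂ X]
    (L : Set (Submodule ℂ X)) (c : Submodule ℂ X → Submodule ℂ X)
    (hB : IsBooleanSubspaceLattice L c)
    (K : Submodule ℂ X) (hK : IsLatAtom L K)
    (M : Submodule ℂ X) (hM : M ∈ L) (hKM : ¬ K ≤ M) : M ≤ c K := by
  obtain ⟨hSL, hdist, _, hcomp, _⟩ := hB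
  obtain ⟨hcK, hKcK, hKjoin⟩ := hcomp K hK.1
  -- K ⊓ M ∈ L
  have hinf : K ⊓ M ∈ L := by
    have := (hSL.2.2.2 {K, M} (by
      intro P hP
      rcases hP with rfl | hP
      · exact hK.1
      · simpa using hP ▸ hM)).2
    simpa [sInf_pair] using this
  have hKM0 : K ⊓ M = ⊥ := by
    rcases hK.2.2.2 (K ⊓ M) hinf inf_le_left with h | h
    · exact h
    · exact absurd (inf_eq_left.mp h) hKM
  -- distributivity
  have hdistM := hdist M hM K hK.1 (c K) hcK
  have hMKbot : M ⊓ K = ⊥ := by rw [inf_comm]; exact hKM0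
  rw [hKjoin, hMKbot] at hdistM
  -- cJoin2 ⊥ (M ⊓ c K) = M ⊓ c K since closed
  have hclosed : IsClosed ((M ⊓ c K : Submodule ℂ X) : Set X) := by
    rw [Submodule.coe_inf]
    exact (hSL.1 M hM).inter (hSL.1 (c K) hcK)
  have hJ : cJoin2 (⊥ : Submodule ℂ X) (M ⊓ c K) = M ⊓ c K := by
    unfold cJoin2
    rw [bot_sup_eq]
    exact le_antisymm (Submodule.topologicalClosure_minimal _ le_rfl hclosed)
      (Submodule.le_topologicalClosure _)
  have : M = M ⊓ c K := by
    calc M = M ⊓ ⊤ := (inf_top_eq M).symm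
    _ = cJoin2 ⊥ (M ⊓ c K) := hdistM
    _ = M ⊓ c K := hJ
  rw [this]; exact inf_le_right

/-- If K is an atom of a Boolean subspace lattice 𝔅 and N ∈ Lat(Alg(𝔅)), then
either K ⊆ N or N ⊆ K'. -/
theorem atom_le_or_le_complement
    {X : Type*} [NormedAddCommGroup X] [NormedSpace ℂ X] [CompleteSpace X]
    (L : Set (Submodule ℂ X)) (c : Submodule ℂ X → Submodule ℂ X)
    (hB : IsBooleanSubspaceLattice L c)
    (K : Submodule ℂ X) (hK : IsLatAtom L K)
    (N : Submodule ℂ X) (hN : N ∈ latOf (algOf L)) :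
    K ≤ N ∨ N ≤ c K := by
  by_cases h : N ≤ c K
  · exact Or.inr h
  · left
    obtain ⟨x, hxN, hxc⟩ := Set.not_subset.mp (fun hs => h (fun a ha => hs ha))
    have hcKL : c K ∈ L := (hB.2.2.2.1 K hK.1).1
    have hcKclosed : IsClosed ((c K : Submodule ℂ X) : Set X) := hB.1.1 (c K) hcKL
    obtain ⟨η, hηx, hηc⟩ := exists_functional_of_not_mem' (c K) hcKclosed hxc
    intro e he
    have hA : rankOne e η ∈ algOf L := by
      intro M hM y hy
      rw [rankOne, ContinuousLinearMap.smulRight_apply]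
      by_cases hKM : K ≤ M
      · exact M.smul_mem _ (hKM he)
      · have : η y = 0 := hηc y (le_complement_of_atom L c hB K hK M hM hKM hy)
        rw [this, zero_smul]
        exact M.zero_mem
    have := hN.2 (rankOne e η) hA x hxN
    rw [rankOne, ContinuousLinearMap.smulRight_apply, hηx, one_smul] at this
    exact this
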